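/- arXiv:1309.6664 — 4 statements merged into one kernel-verified Lean document; each statement's English description precedes it below -/
import Mathlib

section
/- Exactness of Descartes's rule for real-rooted polynomials: if a nonzero real polynomial P splits over ℝ (all its complex roots are real), then the number of positive real roots of P counted with multiplicity equals v(P), and the number of negative real roots counted with multiplicity equals c(P); that is, z⁺(P) = v(P) and z⁻(P) = c(P). -/
open Polynomial

/-- Number of sign changes in a list of reals, after discarding zero entries:
the number of consecutive pairs with negative product. -/
noncomputable def signChanges (l : List ℝ) : ℕ :=
  let l' := l.filter (fun x => decide (x ≠ 0))
  (l'.zip l'.tail).countP (fun p => decide (p.1 * p.2 < 0))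

/-- `v(P)`: number of sign changes in the sequence of nonzero coefficients of `P`,
listed in order of increasing degree. -/
noncomputable def v (P : Polynomial ℝ) : ℕ :=
  signChanges (List.ofFn fun i : Fin (P.natDegree + 1) => P.coeff i)

/-- `c(P) := v(P(-X))`: the number of sign permanences of `P` (minimization convention). -/
noncomputable def c (P : Polynomial ℝ) : ℕ :=
  v (P.comp (-Polynomial.X))

/-- `z⁺(P)`: number of positive real roots of `P`, with multiplicity. -/
noncomputable def zpos (P : Polynomial ℝ) : ℕ :=
  (P.roots.filter (fun x => 0 < x)).card

/-- `z⁻(P)`: number of negative real roots of `P`, with multiplicity. -/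
noncomputable def zneg (P : Polynomial ℝ) : ℕ :=
  (P.roots.filter (fun x => x < 0)).card



/-- raw count of adjacent sign changes (no filtering) -/
noncomputable def V (l : List ℝ) : ℕ :=
  (l.zip l.tail).countP (fun p => decide (p.1 * p.2 < 0))

lemma V_nil : V [] = 0 := rfl
lemma V_single (a : ℝ) : V [a] = 0 := rfl

lemma V_cons_cons (a b : ℝ) (l : List ℝ) :
    V (a :: b :: l) = (if a * b < 0 then 1 else 0) + V (b :: l) := by
  simp only [V, List.tail_cons, List.zip_cons_cons, List.countP_cons]
  by_cases h : a * b < 0 <;> simp [h] <;> omega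

lemma V_le_cons (a : ℝ) (l : List ℝ) : V l ≤ V (a :: l) := by
  cases l with
  | nil => simp [V_nil]
  | cons b l => rw [V_cons_cons]; omega

lemma neg_prod_trans {a b h : ℝ} (hb : b ≠ 0) (hah : a * h < 0) :
    a * b < 0 ∨ b * h < 0 := by
  rcases lt_trichotomy b 0 with h1 | h1 | h1
  · rcases lt_trichotomy a 0 with h2 | h2 | h2
    · right; nlinarith
    · simp [h2] at hah
    · left; nlinarith
  · exact absurd h1 hb
  · rcases lt_trichotomy a 0 with h2 | h2 | h2
    · left; nlinarith
    · simp [h2] at hah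
    · right; nlinarith

lemma V_cons_insert (a b : ℝ) (l : List ℝ) (hb : b ≠ 0) :
    V (a :: l) ≤ V (a :: b :: l) := by
  cases l with
  | nil => simp [V_single, V_cons_cons]
  | cons h l =>
    rw [V_cons_cons, V_cons_cons, V_cons_cons]
    rcases lt_or_ge (a * h) 0 with hah | hah
    · rcases neg_prod_trans hb hah with h1 | h1 <;> simp [hah, h1] <;> omega
    · have : ¬ a * h < 0 := not_lt.2 hah
      simp only [this, if_false]; omega

lemma V_sublist_cons (a : ℝ) : ∀ {u w : List ℝ}, u.Sublist w → (∀ x ∈ w, x ≠ 0) →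
    V (a :: u) ≤ V (a :: w) := by
  intro u w h
  induction h generalizing a with
  | slnil => intro _; exact le_rfl
  | cons b h ih =>
    intro hw
    have hb : b ≠ 0 := hw b (by simp)
    calc V (a :: _) ≤ V (a :: _) := ih a (fun x hx => hw x (by simp [hx]))
      _ ≤ _ := V_cons_insert a b _ hb
  | cons_cons b h ih =>
    intro hw
    rw [V_cons_cons, V_cons_cons]
    have := ih b (fun x hx => hw x (by simp [hx]))
    omega

lemma V_sublist : ∀ {u w : List ℝ}, u.Sublist w → (∀ x ∈ w, x ≠ 0) → V u ≤ V w := by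
  intro u w h hw
  induction h with
  | slnil => exact le_rfl
  | cons b h ih =>
    exact le_trans (ih (fun x hx => hw x (by simp [hx]))) (V_le_cons _ _)
  | cons_cons b h ih =>
    exact V_sublist_cons b h (fun x hx => hw x (by simp [hx]))

lemma V_alt : ∀ {l : List ℝ}, l ≠ [] → l.Chain' (fun x y => x * y < 0) → V l + 1 = l.length := by
  intro l
  induction l with
  | nil => intro h; exact absurd rfl h
  | cons a l ih =>
    intro _ hch
    cases l with
    | nil => simp [V_single]
    | cons b l =>
      simp only [List.Chain', List.isChain_cons_cons] at hch
      rw [V_cons_cons, if_pos hch.1]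
      have := ih (by simp) hch.2
      simp only [List.length_cons] at *
      omega

/-- extraction of a maximal alternating sublist, controlling the head -/
lemma V_extract : ∀ (w : List ℝ), (∀ x ∈ w, x ≠ 0) → w ≠ [] →
    ∃ u : List ℝ, u.Sublist w ∧ u.Chain' (fun x y => x * y < 0) ∧ u.length = V w + 1 ∧
      u.head? = w.head? := by
  intro w
  induction w with
  | nil => intro _ h; exact absurd rfl h
  | cons a w ih =>
    intro hnz _
    cases w with
    | nil =>
      exact ⟨[a], by simp, List.isChain_singleton _, by simp [V_single], rfl⟩
    | cons b w =>
      obtain ⟨u', hsub, hch, hlen, hhead⟩ := ih (fun x hx => hnz x (by simp [hx])) (by simp)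
      -- u' has head b
      obtain ⟨u't, rfl⟩ : ∃ t, u' = b :: t := by
        cases u' with
        | nil => simp at hlen
        | cons x t => simp at hhead; exact ⟨t, by rw [hhead]⟩
      by_cases hab : a * b < 0
      · refine ⟨a :: b :: u't, hsub.cons₂ a, List.isChain_cons_cons.2 ⟨hab, hch⟩, ?_, rfl⟩
        rw [V_cons_cons, if_pos hab]
        simp at hlen ⊢; omega
      · -- replace head b by a
        have htail : u't.Sublist (b :: w) := (List.sublist_cons_self b u't).trans hsub
        refine ⟨a :: u't, ?_, ?_, ?_, rfl⟩
        · exact htail.cons₂ a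
        · cases u't with
          | nil => exact List.isChain_singleton _
          | cons c t =>
            simp only [List.Chain', List.isChain_cons_cons] at hch ⊢
            refine ⟨?_, hch.2⟩
            -- a and b same sign (both nonzero), b*c<0 hence a*c<0
            have ha : a ≠ 0 := hnz a (by simp)
            have hb : b ≠ 0 := hnz b (by simp)
            have hbc := hch.1
            rcases lt_trichotomy a 0 with h1 | h1 | h1
            · rcases lt_trichotomy b 0 with h2 | h2 | h2
              · nlinarith
              · exact absurd h2 hb
              · nlinarith
            · exact absurd h1 ha
            · rcases lt_trichotomy b 0 with h2 | h2 | h2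
              · nlinarith
              · exact absurd h2 hb
              · nlinarith
        · rw [V_cons_cons, if_neg hab]
          simp at hlen ⊢; omega


lemma map_sublist_ofFn {n : ℕ} (f : ℕ → ℝ) (ks : List ℕ) (hch : ks.Chain' (· < ·))
    (hb : ∀ k ∈ ks, k < n) : (ks.map f).Sublist (List.ofFn fun i : Fin n => f i) := by
  have hp : ks.Pairwise (· < ·) := List.isChain_iff_pairwise.mp hch
  have heq : ks.map f = List.map (List.ofFn fun i : Fin n => f i).get
      (ks.pmap (fun k hk => (⟨k, hk⟩ : Fin (List.ofFn fun i : Fin n => f i).length))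
        (by intro k hk; rw [List.length_ofFn]; exact hb k hk)) := by
    rw [List.map_pmap, List.pmap_eq_map_attach]
    simp [List.get_ofFn]
  rw [heq]
  apply List.map_getElem_sublist
  apply List.Pairwise.pmap hp
  intro a ha b hb hab
  simpa using hab

noncomputable def signChanges' (l : List ℝ) : ℕ :=
  let l' := l.filter (fun x => decide (x ≠ 0))
  (l'.zip l'.tail).countP (fun p => decide (p.1 * p.2 < 0))

lemma signChanges'_eq (l : List ℝ) :
    signChanges' l = V (l.filter (fun x => decide (x ≠ 0))) := rfl

noncomputable def v' (P : Polynomial ℝ) : ℕ :=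
  signChanges' (List.ofFn fun i : Fin (P.natDegree + 1) => P.coeff i)

/-- Lemma A : any alternating chain of coefficient indices bounds `v` from below. -/
lemma length_le_v'_add_one (P : Polynomial ℝ) (ks : List ℕ) (hch : ks.Chain' (· < ·))
    (halt : (ks.map P.coeff).Chain' (fun x y => x * y < 0))
    (hnz : ∀ k ∈ ks, P.coeff k ≠ 0) : ks.length ≤ v' P + 1 := by
  cases ks with
  | nil => simp
  | cons k0 kt =>
    set ks := k0 :: kt
    set u : List ℝ := ks.map P.coeff with hu
    have hsub : u.Sublist (List.ofFn fun i : Fin (P.natDegree + 1) => P.coeff i) :=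
      map_sublist_ofFn P.coeff ks hch
        (fun k hk => Nat.lt_succ_of_le (P.le_natDegree_of_ne_zero (hnz k hk)))
    have hufil : u.filter (fun x => decide (x ≠ 0)) = u := by
      rw [List.filter_eq_self]
      intro a ha
      obtain ⟨k, hk, rfl⟩ := List.mem_map.mp ha
      simpa using hnz k hk
    have hsub2 : u.Sublist ((List.ofFn fun i : Fin (P.natDegree + 1) => P.coeff i).filter
        (fun x => decide (x ≠ 0))) := by
      rw [← hufil]; exact hsub.filter _
    have hmono : V u ≤ V _ := V_sublist hsub2 (by
      intro x hx
      have := List.of_mem_filter hx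
      simpa using this)
    have hlen : V u + 1 = u.length := V_alt (by simp [hu, ks]) halt
    have : ks.length = u.length := (List.length_map _).symm
    rw [v', signChanges'_eq]
    omega

lemma get_ofFn' {n : ℕ} (f : ℕ → ℝ) (i : Fin (List.ofFn fun j : Fin n => f j).length) :
    (List.ofFn fun j : Fin n => f j).get i = f i.val := by
  rw [List.get_ofFn]
  rfl

/-- Lemma B : extraction of an alternating chain of length `v P + 1`. -/
lemma exists_alt_chain (P : Polynomial ℝ) (hP : P ≠ 0) :
    ∃ ks : List ℕ, ks ≠ [] ∧ ks.Chain' (· < ·) ∧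
      (ks.map P.coeff).Chain' (fun x y => x * y < 0) ∧
      (∀ k ∈ ks, P.coeff k ≠ 0) ∧ ks.length = v' P + 1 := by
  set l : List ℝ := List.ofFn fun i : Fin (P.natDegree + 1) => P.coeff i with hl
  set w : List ℝ := l.filter (fun x => decide (x ≠ 0)) with hw
  have hwnz : ∀ x ∈ w, x ≠ 0 := by
    intro x hx
    have := List.of_mem_filter hx
    simpa using this
  have hwne : w ≠ [] := by
    have hmem : P.coeff P.natDegree ∈ l := by
      rw [hl]
      exact List.mem_ofFn.mpr ⟨⟨P.natDegree, Nat.lt_succ_self _⟩, rfl⟩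
    have : P.coeff P.natDegree ∈ w := by
      rw [hw]
      exact List.mem_filter.mpr ⟨hmem, by simpa using Polynomial.leadingCoeff_ne_zero.mpr hP⟩
    exact List.ne_nil_of_mem this
  obtain ⟨u, husub, huch, hulen, _⟩ := V_extract w hwnz hwne
  have husubl : u.Sublist l := husub.trans List.filter_sublist
  obtain ⟨is, rfl, hispw⟩ := List.sublist_eq_map_getElem husubl
  refine ⟨is.map Fin.val, ?_, ?_, ?_, ?_, ?_⟩
  · intro hemp
    have : is = [] := by simpa using hemp
    rw [this] at hulen; simp at hulen
  · refine List.Pairwise.isChain ?_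
    exact List.Pairwise.map (f := Fin.val) (S := (· < ·)) (fun a b h => h) hispw
  · have : (is.map Fin.val).map P.coeff = is.map l.get := by
      rw [List.map_map]
      apply List.map_congr_left
      intro i hi
      exact (get_ofFn' P.coeff i).symm
    rw [this]; exact huch
  · intro k hk
    obtain ⟨i, hi, rfl⟩ := List.mem_map.mp hk
    have : l.get i ∈ is.map l.get := List.mem_map_of_mem (f := l.get) hi
    have h2 : l.get i ∈ w := husub.mem this
    have h3 : l.get i = P.coeff i.val := get_ofFn' P.coeff i
    rw [← h3]; exact hwnz _ h2
  · rw [List.length_map]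
    have : is.length = (is.map l.get).length := (List.length_map _).symm
    rw [this, show (is.map l.get).length = (List.map (fun x => l[x]) is).length from rfl, hulen, v', signChanges'_eq]

lemma coeff_q_zero (r : ℝ) (P : Polynomial ℝ) :
    ((X - C r) * P).coeff 0 = -r * P.coeff 0 := by
  rw [Polynomial.mul_coeff_zero]
  simp

lemma coeff_q_succ (r : ℝ) (P : Polynomial ℝ) (j : ℕ) :
    ((X - C r) * P).coeff (j + 1) = P.coeff j - r * P.coeff (j + 1) := by
  rw [sub_mul, Polynomial.coeff_sub, Polynomial.coeff_X_mul, Polynomial.coeff_C_mul]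

lemma sum_I1 (r : ℝ) (P : Polynomial ℝ) (i : ℕ) :
    ∑ j ∈ Finset.range (i + 1), r ^ j * ((X - C r) * P).coeff j
      = -(r ^ (i + 1) * P.coeff i) := by
  induction i with
  | zero => simp [coeff_q_zero]
  | succ i ih =>
    rw [Finset.sum_range_succ, ih, coeff_q_succ]
    ring

lemma sum_I2 (r : ℝ) (P : Polynomial ℝ) {a b : ℕ} (hab : a < b) :
    ∑ j ∈ Finset.Ioc a b, r ^ j * ((X - C r) * P).coeff j
      = r ^ (a + 1) * P.coeff a - r ^ (b + 1) * P.coeff b := by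
  have h : Finset.Ioc a b = Finset.Ico (a + 1) (b + 1) := by
    ext x; simp [Nat.lt_succ_iff, Nat.succ_le_iff]
  rw [h, Finset.sum_Ico_eq_sub _ (by omega), sum_I1, sum_I1]
  ring

lemma exists_sign_of_sum (S : Finset ℕ) (g q : ℕ → ℝ) (hg : ∀ j ∈ S, 0 < g j) (z : ℝ)
    (h : 0 < (∑ j ∈ S, g j * q j) * z) : ∃ j ∈ S, 0 < q j * z := by
  by_contra hcon
  push_neg at hcon
  have : (∑ j ∈ S, g j * q j) * z = ∑ j ∈ S, g j * (q j * z) := by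
    rw [Finset.sum_mul]; apply Finset.sum_congr rfl; intros; ring
  rw [this] at h
  have : ∑ j ∈ S, g j * (q j * z) ≤ 0 :=
    Finset.sum_nonpos (fun j hj => mul_nonpos_of_nonneg_of_nonpos (hg j hj).le (hcon j hj))
  linarith

lemma rec_main (r : ℝ) (hr : 0 < r) (P : Polynomial ℝ) :
    ∀ (ks : List ℕ) (a : ℕ), (a :: ks).Chain' (· < ·) →
      ((a :: ks).map P.coeff).Chain' (fun x y => x * y < 0) → P.coeff a ≠ 0 →
    ∃ (u0 : ℕ) (us : List ℕ),
      (u0 :: us).length = ks.length + 1 ∧ (u0 :: us).Chain' (· < ·) ∧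
      (∀ u ∈ u0 :: us, a < u) ∧
      ((u0 :: us).map (((X - C r) * P).coeff)).Chain' (fun x y => x * y < 0) ∧
      (∀ u ∈ u0 :: us, ((X - C r) * P).coeff u ≠ 0) ∧
      0 < ((X - C r) * P).coeff u0 * P.coeff a := by
  intro ks
  induction ks with
  | nil =>
    intro a _ _ hpa
    set b := max (a + 1) (P.natDegree + 1) with hb
    have hab : a < b := lt_of_lt_of_le (Nat.lt_succ_self a) (le_max_left _ _)
    have hpb : P.coeff b = 0 :=
      P.coeff_eq_zero_of_natDegree_lt (lt_of_lt_of_le (Nat.lt_succ_self _) (le_max_right _ _))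
    have hsum : ∑ j ∈ Finset.Ioc a b, r ^ j * ((X - C r) * P).coeff j
        = r ^ (a + 1) * P.coeff a := by
      rw [sum_I2 r P hab, hpb]; ring
    have hpos : 0 < (∑ j ∈ Finset.Ioc a b, r ^ j * ((X - C r) * P).coeff j) * P.coeff a := by
      rw [hsum]
      have := pow_pos hr (a + 1)
      have := mul_self_pos.mpr hpa
      nlinarith
    obtain ⟨j, hj, hjpos⟩ := exists_sign_of_sum _ _ _ (fun j _ => pow_pos hr j) _ hpos
    have haj : a < j := (Finset.mem_Ioc.mp hj).1
    refine ⟨j, [], rfl, List.isChain_singleton _, by simpa using haj, List.isChain_singleton _,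
      ?_, hjpos⟩
    intro u hu
    have : u = j := by simpa using hu
    subst this
    intro h; rw [h] at hjpos; simp at hjpos
  | cons i tl ih =>
    intro a hch halt hpa
    have hai : a < i := (List.isChain_cons_cons.mp hch).1
    have halt2 := List.isChain_cons_cons.mp
      (show (P.coeff a :: P.coeff i :: List.map P.coeff tl).Chain' (fun x y => x * y < 0)
        from halt)
    have hpapi : P.coeff a * P.coeff i < 0 := halt2.1
    have hpi : P.coeff i ≠ 0 := by
      intro h; rw [h] at hpapi; simp at hpapi
    obtain ⟨u1, us', hlen, hch', hgt', haltq', hnz', hsgn'⟩ :=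
      ih i ((List.isChain_cons_cons.mp hch).2) halt2.2 hpi
    have hsum := sum_I2 r P hai
    have hpos : 0 < (∑ j ∈ Finset.Ioc a i, r ^ j * ((X - C r) * P).coeff j) * P.coeff a := by
      rw [hsum]
      have h1 := pow_pos hr (a + 1)
      have h2 := pow_pos hr (i + 1)
      have h3 := mul_self_pos.mpr hpa
      nlinarith
    obtain ⟨u0, hu0, hu0pos⟩ := exists_sign_of_sum _ _ _ (fun j _ => pow_pos hr j) _ hpos
    rw [Finset.mem_Ioc] at hu0
    have hq0 : ((X - C r) * P).coeff u0 ≠ 0 := by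
      intro h; rw [h] at hu0pos; simp at hu0pos
    have hjunc : ((X - C r) * P).coeff u0 * ((X - C r) * P).coeff u1 < 0 := by nlinarith
    refine ⟨u0, u1 :: us', by simp at hlen ⊢; omega, ?_, ?_, ?_, ?_, hu0pos⟩
    · exact List.isChain_cons_cons.mpr ⟨lt_of_le_of_lt hu0.2 (hgt' u1 (by simp)), hch'⟩
    · intro u hu
      rcases List.mem_cons.mp hu with rfl | hu
      · exact hu0.1
      · exact lt_trans hai (hgt' u hu)
    · exact List.isChain_cons_cons.mpr ⟨hjunc, haltq'⟩
    · intro u hu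
      rcases List.mem_cons.mp hu with rfl | hu
      · exact hq0
      · exact hnz' u hu

lemma v'_mul (r : ℝ) (hr : 0 < r) (P : Polynomial ℝ) (hP : P ≠ 0) :
    v' P + 1 ≤ v' ((X - C r) * P) := by
  obtain ⟨ks, hne, hch, halt, hnz, hlen⟩ := exists_alt_chain P hP
  obtain ⟨k0, kt, rfl⟩ := List.exists_cons_of_ne_nil hne
  have hpk0 : P.coeff k0 ≠ 0 := hnz k0 (by simp)
  obtain ⟨u0, us, hulen, huch, hugt, hualt, hunz, husgn⟩ := rec_main r hr P kt k0 hch halt hpk0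
  have hsumn := sum_I1 r P k0
  have hpos : 0 < (∑ j ∈ Finset.range (k0 + 1), r ^ j * ((X - C r) * P).coeff j)
      * (-(P.coeff k0)) := by
    rw [hsumn]
    have h1 := pow_pos hr (k0 + 1)
    have h3 := mul_self_pos.mpr hpk0
    nlinarith
  obtain ⟨j, hj, hjpos⟩ := exists_sign_of_sum _ _ _ (fun j _ => pow_pos hr j) _ hpos
  rw [Finset.mem_range] at hj
  have hqj : ((X - C r) * P).coeff j ≠ 0 := by
    intro h; rw [h] at hjpos; simp at hjpos
  have hjunc : ((X - C r) * P).coeff j * ((X - C r) * P).coeff u0 < 0 := by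
    nlinarith [mul_pos hjpos husgn, mul_self_pos.mpr hpk0]
  have hju0 : j < u0 := lt_of_le_of_lt (Nat.lt_succ_iff.mp hj) (hugt u0 (by simp))
  have hfin := length_le_v'_add_one ((X - C r) * P) (j :: u0 :: us)
    (List.isChain_cons_cons.mpr ⟨hju0, huch⟩)
    (List.isChain_cons_cons.mpr ⟨hjunc, hualt⟩)
    (by
      intro u hu
      rcases List.mem_cons.mp hu with rfl | hu
      · exact hqj
      · exact hunz u hu)
  simp only [List.length_cons] at hfin hlen hulen
  omega

lemma V_map_neg : ∀ l : List ℝ, V (l.map (fun x => -x)) = V l := by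
  intro l
  induction l with
  | nil => rfl
  | cons a t ih =>
    cases t with
    | nil => rfl
    | cons b t' =>
      rw [List.map_cons, List.map_cons, V_cons_cons, V_cons_cons]
      rw [List.map_cons] at ih
      rw [ih]
      congr 1
      simp [neg_mul_neg]

lemma signChanges'_neg (l : List ℝ) : signChanges' (l.map (fun x => -x)) = signChanges' l := by
  rw [signChanges'_eq, signChanges'_eq]
  have h1 : (l.map (fun x => -x)).filter (fun x => decide (x ≠ 0))
      = (l.filter (fun x => decide (x ≠ 0))).map (fun x => -x) := by
    rw [List.filter_map]
    congr 1
    apply List.filter_congr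
    intro a _
    simp
  rw [h1, V_map_neg]

lemma ofFn_congr' {m n : ℕ} (h : m = n) (f : ℕ → ℝ) :
    List.ofFn (fun i : Fin m => f i) = List.ofFn (fun i : Fin n => f i) := by subst h; rfl

lemma v'_neg (Q : Polynomial ℝ) : v' (-Q) = v' Q := by
  unfold v'
  have h1 : (List.ofFn fun i : Fin ((-Q).natDegree + 1) => (-Q).coeff i)
      = List.ofFn fun i : Fin (Q.natDegree + 1) => -(Q.coeff i) := by
    rw [ofFn_congr' (by rw [natDegree_neg]) (fun i => (-Q).coeff i)]
    congr 1
  rw [h1]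
  have h2 : (List.ofFn fun i : Fin (Q.natDegree + 1) => -(Q.coeff i))
      = (List.ofFn fun i : Fin (Q.natDegree + 1) => Q.coeff i).map (fun x => -x) := by
    rw [List.map_ofFn]; rfl
  rw [h2, signChanges'_neg]

lemma step_fact (a b : ℝ) (ha : a ≠ 0) (hb : b ≠ 0) {i j : ℕ} (hij : i < j) :
    (if a * b < 0 then 1 else 0) + (if ((-1 : ℝ) ^ i * a) * ((-1 : ℝ) ^ j * b) < 0 then 1 else 0)
      + i ≤ j := by
  rcases Nat.lt_or_ge (i + 1) j with h | h
  · split_ifs <;> omega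
  · have hj : j = i + 1 := by omega
    subst hj
    have hkey : ((-1 : ℝ) ^ i * a) * ((-1 : ℝ) ^ (i + 1) * b) = -(a * b) := by
      rw [pow_succ]
      have h1 : ((-1 : ℝ) ^ i) * ((-1 : ℝ) ^ i) = 1 := by
        rw [← pow_add, ← two_mul, pow_mul]; norm_num
      linear_combination (-a * b) * h1
    rw [hkey]
    rcases lt_trichotomy (a * b) 0 with h1 | h1 | h1
    · rw [if_pos h1, if_neg (by linarith)]; omega
    · exact absurd (mul_eq_zero.mp h1) (by simp [ha, hb])
    · rw [if_neg (by linarith), if_pos (by linarith)]; omega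

lemma pairs_bound : ∀ (D : List (ℕ × ℝ)) (x : ℕ × ℝ),
    (x :: D).Chain' (fun a b => a.1 < b.1) → (∀ pr ∈ x :: D, pr.2 ≠ 0) →
    V ((x :: D).map Prod.snd)
      + V ((x :: D).map (fun pr => (-1 : ℝ) ^ pr.1 * pr.2)) + x.1
      ≤ ((x :: D).getLast (by simp)).1 := by
  intro D
  induction D with
  | nil => intro x _ _; simp [V_single]
  | cons y D' ih =>
    intro x hch hnz
    have hxy : x.1 < y.1 := (List.isChain_cons_cons.mp hch).1
    have ihy := ih y (List.isChain_cons_cons.mp hch).2 (fun pr hpr => hnz pr (by simp at hpr ⊢; tauto))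
    have hstep := step_fact x.2 y.2 (hnz x (by simp)) (hnz y (by simp)) hxy
    have e1 : V ((x :: y :: D').map Prod.snd)
        = (if x.2 * y.2 < 0 then 1 else 0) + V ((y :: D').map Prod.snd) := by
      rw [List.map_cons, List.map_cons, V_cons_cons]
    have e2 : V ((x :: y :: D').map (fun pr => (-1 : ℝ) ^ pr.1 * pr.2))
        = (if ((-1 : ℝ) ^ x.1 * x.2) * ((-1 : ℝ) ^ y.1 * y.2) < 0 then 1 else 0)
          + V ((y :: D').map (fun pr => (-1 : ℝ) ^ pr.1 * pr.2)) := by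
      rw [List.map_cons, List.map_cons, V_cons_cons]
    have e3 : ((x :: y :: D').getLast (by simp)) = ((y :: D').getLast (by simp)) :=
      List.getLast_cons (by simp)
    rw [e1, e2, e3]
    omega

lemma coeff_comp_neg_X (P : Polynomial ℝ) (i : ℕ) :
    (P.comp (-X)).coeff i = (-1)^i * P.coeff i := by
  induction P using Polynomial.induction_on' with
  | add p q hp hq => simp [add_comp, hp, hq, mul_add]
  | monomial n a =>
    rw [← C_mul_X_pow_eq_monomial, mul_comp, C_comp, pow_comp, X_comp, neg_pow (X : ℝ[X]) n,
      show ((-1:ℝ[X])^n) = C ((-1:ℝ)^n) by simp,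
      coeff_C_mul, coeff_C_mul, coeff_C_mul, coeff_X_pow]
    by_cases h : i = n
    · subst h; simp; ring
    · simp [h]

lemma natDegree_comp_neg_X (P : Polynomial ℝ) : (P.comp (-X)).natDegree = P.natDegree := by
  rw [natDegree_comp]
  simp

lemma comp_neg_X_ne_zero {P : Polynomial ℝ} (hP : P ≠ 0) : P.comp (-X) ≠ 0 := by
  intro h
  apply hP
  have : (P.comp (-X)).comp (-X) = P := by
    rw [Polynomial.comp_assoc]
    simp
  rw [h] at this
  simpa using this.symm

lemma vc_bound (P : Polynomial ℝ) (hP : P ≠ 0) :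
    v' P + v' (P.comp (-X)) + P.natTrailingDegree ≤ P.natDegree := by
  set n := P.natDegree with hn
  set l₂ : List (ℕ × ℝ) := List.ofFn (fun i : Fin (n+1) => ((i : ℕ), P.coeff i)) with hl₂
  set D := l₂.filter (fun pr => decide (pr.2 ≠ 0)) with hD
  have hmemD : ((n : ℕ), P.coeff n) ∈ D := by
    rw [hD]
    refine List.mem_filter.mpr ⟨?_, ?_⟩
    · rw [hl₂]
      exact List.mem_ofFn.mpr ⟨⟨n, Nat.lt_succ_self _⟩, rfl⟩
    · simp only [hn, decide_eq_true_eq, Polynomial.coeff_natDegree]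
      exact fun h => hP (Polynomial.leadingCoeff_eq_zero.mp h)
  have hpw : l₂.Pairwise (fun a b => a.1 < b.1) := by
    rw [hl₂]
    exact List.pairwise_ofFn.mpr (fun i j h => by simpa using h)
  have hDpw : D.Pairwise (fun a b => a.1 < b.1) := List.Pairwise.sublist (List.filter_sublist (l := l₂)) hpw
  have hDmem : ∀ pr ∈ D, pr.2 = P.coeff pr.1 ∧ pr.2 ≠ 0 := by
    intro pr hpr
    have h1 := List.mem_filter.mp hpr
    obtain ⟨i, hi⟩ := List.mem_ofFn.mp h1.1
    refine ⟨?_, by simpa using h1.2⟩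
    rw [← hi]
  have hv : v' P = V (D.map Prod.snd) := by
    rw [v', signChanges'_eq]
    have h0 : (List.ofFn fun i : Fin (P.natDegree + 1) => P.coeff i) = l₂.map Prod.snd := by
      rw [hl₂, List.map_ofFn]; rfl
    rw [h0, List.filter_map]
    rfl
  have hvN : v' (P.comp (-X)) = V (D.map (fun pr => (-1 : ℝ) ^ pr.1 * pr.2)) := by
    rw [v', signChanges'_eq]
    have h0 : (List.ofFn fun i : Fin ((P.comp (-X)).natDegree + 1) => (P.comp (-X)).coeff i)
        = List.ofFn (fun i : Fin (n+1) => (-1 : ℝ) ^ (i : ℕ) * P.coeff i) := by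
      rw [ofFn_congr' (by rw [natDegree_comp_neg_X]) (fun i => (P.comp (-X)).coeff i)]
      congr 1
      funext i
      exact coeff_comp_neg_X P i
    have h1 : List.ofFn (fun i : Fin (n+1) => (-1 : ℝ) ^ (i : ℕ) * P.coeff i)
        = l₂.map (fun pr => (-1 : ℝ) ^ pr.1 * pr.2) := by
      rw [hl₂, List.map_ofFn]; rfl
    rw [h0, h1, List.filter_map, hD]
    refine congrArg V (congrArg (List.map (fun pr : ℕ × ℝ => (-1 : ℝ) ^ pr.1 * pr.2)) (List.filter_congr ?_))
    intro pr _
    simp only [Function.comp_apply, decide_eq_decide]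
    constructor
    · intro h hc; exact h (by rw [hc, mul_zero])
    · intro h; exact mul_ne_zero (by positivity) h
  obtain ⟨x, D', hxD⟩ := List.exists_cons_of_ne_nil (List.ne_nil_of_mem hmemD)
  have hch : (x :: D').Chain' (fun a b => a.1 < b.1) := by
    rw [← hxD]; exact hDpw.isChain
  have hnz : ∀ pr ∈ x :: D', pr.2 ≠ 0 := by
    intro pr hpr; exact (hDmem pr (by rw [hxD]; exact hpr)).2
  have hbound := pairs_bound D' x hch hnz
  have hxmem : x ∈ D := by rw [hxD]; simp
  have htr : P.natTrailingDegree ≤ x.1 := by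
    have := hDmem x hxmem
    exact Polynomial.natTrailingDegree_le_of_ne_zero (by rw [← this.1]; exact this.2)
  have hlastmem : (x :: D').getLast (by simp) ∈ D := by
    rw [hxD]; exact List.getLast_mem _
  have hlast : ((x :: D').getLast (by simp)).1 ≤ n := by
    have := hDmem _ hlastmem
    exact Polynomial.le_natDegree_of_ne_zero (by rw [← this.1]; exact this.2)
  rw [hv, hvN, hxD]
  omega

lemma zpos_le_aux : ∀ (N : ℕ) (P : Polynomial ℝ), P ≠ 0 → P.Splits →
    (P.roots.filter (fun x => 0 < x)).card = N → N ≤ v' P := by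
  intro N
  induction N with
  | zero => intro P _ _ _; exact Nat.zero_le _
  | succ N ih =>
    intro P hP hs hcard
    obtain ⟨r, hr⟩ := Multiset.card_pos_iff_exists_mem.mp (by rw [hcard]; omega)
    rw [Multiset.mem_filter] at hr
    have hroot : P.IsRoot r := isRoot_of_mem_roots hr.1
    obtain ⟨R, hR⟩ := dvd_iff_isRoot.mpr hroot
    have hRne : R ≠ 0 := by
      rintro rfl; rw [mul_zero] at hR; exact hP hR
    have hdvd : R ∣ P := ⟨X - C r, by rw [hR]; ring⟩
    have hroots : P.roots = (X - C r).roots + R.roots := by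
      rw [hR]; exact roots_mul (by rw [← hR]; exact hP)
    have hcard' : (R.roots.filter (fun x => 0 < x)).card = N := by
      have : (P.roots.filter (fun x => 0 < x)).card
          = 1 + (R.roots.filter (fun x => 0 < x)).card := by
        rw [hroots, Multiset.filter_add, Multiset.card_add, roots_X_sub_C,
          Multiset.filter_singleton, if_pos hr.2]
        simp
      omega
    have hRs : R.Splits := hs.of_dvd hP hdvd
    have := v'_mul r hr.2 R hRne
    have := ih R hRne hRs hcard'
    rw [hR]
    omega

lemma zneg_le_aux : ∀ (N : ℕ) (P : Polynomial ℝ), P ≠ 0 → P.Splits →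
    (P.roots.filter (fun x => x < 0)).card = N → N ≤ v' (P.comp (-X)) := by
  intro N
  induction N with
  | zero => intro P _ _ _; exact Nat.zero_le _
  | succ N ih =>
    intro P hP hs hcard
    obtain ⟨r, hr⟩ := Multiset.card_pos_iff_exists_mem.mp (by rw [hcard]; omega)
    rw [Multiset.mem_filter] at hr
    have hroot : P.IsRoot r := isRoot_of_mem_roots hr.1
    obtain ⟨R, hR⟩ := dvd_iff_isRoot.mpr hroot
    have hRne : R ≠ 0 := by
      rintro rfl; rw [mul_zero] at hR; exact hP hR
    have hdvd : R ∣ P := ⟨X - C r, by rw [hR]; ring⟩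
    have hroots : P.roots = (X - C r).roots + R.roots := by
      rw [hR]; exact roots_mul (by rw [← hR]; exact hP)
    have hcard' : (R.roots.filter (fun x => x < 0)).card = N := by
      have : (P.roots.filter (fun x => x < 0)).card
          = 1 + (R.roots.filter (fun x => x < 0)).card := by
        rw [hroots, Multiset.filter_add, Multiset.card_add, roots_X_sub_C,
          Multiset.filter_singleton, if_pos hr.2]
        simp
      omega
    have hRs : R.Splits := hs.of_dvd hP hdvd
    have hcomp : P.comp (-X) = -((X - C (-r)) * (R.comp (-X))) := by
      rw [hR, mul_comp, sub_comp, X_comp, C_comp]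
      ring_nf
      rw [map_neg]
      ring
    have hRcne : R.comp (-X) ≠ 0 := comp_neg_X_ne_zero hRne
    have h1 := v'_mul (-r) (by linarith [hr.2]) (R.comp (-X)) hRcne
    have h2 := ih R hRne hRs hcard'
    rw [hcomp, v'_neg]
    omega

lemma rm0_eq_trailing (P : Polynomial ℝ) (hP : P ≠ 0) :
    P.rootMultiplicity 0 = P.natTrailingDegree := by
  have hXC : (X - C (0:ℝ)) = X := by rw [map_zero, sub_zero]
  apply le_antisymm
  · by_contra hlt
    push_neg at hlt
    have hdvd : (X - C (0:ℝ)) ^ (P.natTrailingDegree + 1) ∣ P :=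
      (le_rootMultiplicity_iff hP).mp hlt
    rw [hXC] at hdvd
    have := (X_pow_dvd_iff.mp hdvd) P.natTrailingDegree (Nat.lt_succ_self _)
    exact (Polynomial.trailingCoeff_eq_zero.not.mpr hP) this
  · rw [le_rootMultiplicity_iff hP, hXC, X_pow_dvd_iff]
    intro d hd
    exact coeff_eq_zero_of_lt_natTrailingDegree hd

lemma roots_card_split (P : Polynomial ℝ) (hP : P ≠ 0) (hs : P.Splits) :
    (P.roots.filter (fun x => 0 < x)).card + (P.roots.filter (fun x => x < 0)).card
      + P.natTrailingDegree = P.natDegree := by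
  classical
  have h1 : Multiset.card P.roots = P.natDegree := splits_iff_card_roots.mp hs
  have h2 := Multiset.filter_add_not (fun x => 0 < x) P.roots
  have h3 := Multiset.filter_add_not (fun x => x < 0) (P.roots.filter (fun x => ¬ 0 < x))
  have h4 : (P.roots.filter (fun x => ¬ 0 < x)).filter (fun x => x < 0)
      = P.roots.filter (fun x => x < 0) := by
    rw [Multiset.filter_filter]
    apply Multiset.filter_congr
    intro x _
    constructor
    · exact fun h => h.1
    · exact fun h => ⟨h, by linarith⟩
  have h5 : (P.roots.filter (fun x => ¬ 0 < x)).filter (fun x => ¬ x < 0)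
      = P.roots.filter (fun x => x = 0) := by
    rw [Multiset.filter_filter]
    apply Multiset.filter_congr
    intro x _
    constructor
    · intro h; linarith [h.1, h.2]
    · intro h; constructor <;> simp [h]
  have hcr : P.roots.count 0 = P.rootMultiplicity 0 := count_roots P
  rw [Multiset.count_eq_card_filter_eq] at hcr
  have h6 : (P.roots.filter (fun x => x = 0)).card = P.rootMultiplicity 0 := by
    rw [← hcr]
    congr 1
    apply Multiset.filter_congr
    intro x _
    exact ⟨fun h => h.symm, fun h => h.symm⟩
  have hc2 := congrArg Multiset.card h2
  have hc3 := congrArg Multiset.card h3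
  rw [Multiset.card_add] at hc2 hc3
  rw [h4, h5, h6, rm0_eq_trailing P hP] at hc3
  omega

/-- Exactness of Descartes's rule for real-rooted polynomials: if all the complex roots
of `P` are real (i.e. `P` splits over `ℝ`), then `z⁺(P) = v(P)` and `z⁻(P) = c(P)`. -/
theorem descartes_exact_of_splits (P : Polynomial ℝ) (hP : P ≠ 0)
    (hsplits : (P.map (RingHom.id ℝ)).Splits) :
    zpos P = v P ∧ zneg P = c P := by
  rw [Polynomial.map_id] at hsplits
  have hv : v P = v' P := rfl
  have hc : c P = v' (P.comp (-Polynomial.X)) := rfl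
  have h1 : zpos P ≤ v' P := zpos_le_aux (zpos P) P hP hsplits rfl
  have h2 : zneg P ≤ v' (P.comp (-X)) := zneg_le_aux (zneg P) P hP hsplits rfl
  have h3 := vc_bound P hP
  have h4 := roots_card_split P hP hsplits
  have h5 : zpos P = (P.roots.filter (fun x => 0 < x)).card := rfl
  have h6 : zneg P = (P.roots.filter (fun x => x < 0)).card := rfl
  constructor <;> omega
end

section
/- Multiplication lemma for alternations (Descartes's strategy): for every nonzero real polynomial Q and every real α > 0, the polynomial (X − α)·Q(X) has strictly more sign alternations than Q; that is, v((X − α)·Q) ≥ v(Q) + 1. -/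
open Polynomial

open List


/-- number of adjacent sign changes -/
noncomputable def chg (l : List ℝ) : ℕ := (l.zip l.tail).countP (fun p => decide (p.1 * p.2 < 0))

@[simp] lemma chg_nil : chg ([] : List ℝ) = 0 := rfl
@[simp] lemma chg_singleton (a : ℝ) : chg [a] = 0 := rfl

lemma chg_cons_cons (a b : ℝ) (t : List ℝ) :
    chg (a::b::t) = chg (b::t) + (if a*b < 0 then 1 else 0) := by
  simp [chg, List.countP_cons, Nat.add_comm]

lemma chg_le_cons (a : ℝ) (t : List ℝ) : chg t ≤ chg (a::t) := by
  cases t with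
  | nil => simp
  | cons b t => rw [chg_cons_cons]; omega

lemma chg_cons_of_pos {a b : ℝ} (hab : 0 < a*b) (t : List ℝ) : chg (a::t) = chg (b::t) := by
  cases t with
  | nil => simp
  | cons c t =>
    rw [chg_cons_cons, chg_cons_cons]
    congr 1
    have : a*c < 0 ↔ b*c < 0 := by
      constructor <;> intro h <;> nlinarith [sq_nonneg c, sq_nonneg a, sq_nonneg b]
    simp [this]

lemma sub_tail {α : Type*} {x y : α} {s t : List α} (h : (x::s) <+ (y::t)) : s <+ t := by
  cases h with
  | cons _ h => exact (List.sublist_cons_self x s).trans h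
  | cons_cons _ h => exact h

lemma sign_trans {x a y b : ℝ} (h1 : x*a<0) (h2 : y*b<0) (h3 : a*b<0) : x*y<0 := by
  nlinarith [mul_pos (neg_pos.mpr h1) (neg_pos.mpr h2), sq_nonneg (a*b)]
lemma sign_trans' {x a b : ℝ} (h1 : x*a<0) (h3 : 0 < a*b) : x*b<0 := by
  nlinarith [mul_pos (neg_pos.mpr h1) h3, sq_nonneg a]
lemma sign_trans3 {x a b : ℝ} (h1 : 0 < x*a) (h3 : 0 < a*b) : 0 < x*b := by
  nlinarith [mul_pos h1 h3, sq_nonneg a]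

/-- Strengthened lower bound: alternating sublist whose head has the same sign as the
head of the ambient (all-nonzero) list. -/
lemma aux_lower : ∀ N : ℕ, ∀ l s : List ℝ, l.length ≤ N → (∀ x ∈ l, x ≠ 0) →
    s <+ l → s.Chain' (fun x y => x*y < 0) →
    0 < s.headI * l.headI → s.length ≤ chg l + 1 := by
  intro N
  induction N with
  | zero =>
    intro l s hlen _ hsl _ hhead
    interval_cases hl : l.length
    · rw [List.length_eq_zero_iff] at hl; subst hl
      simpa using (List.sublist_nil.mp hsl) ▸ (by simp)
  | succ N IH =>
    intro l s hlen hnz hsl hch hhead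
    match l, s with
    | l, [] => simp
    | [], h :: s₁ => simp at hsl
    | a :: t, h :: s₁ =>
      cases s₁ with
      | nil => simp only [List.length_cons, List.length_nil]; omega
      | cons x s₂ =>
        have hhx : h * x < 0 := (List.isChain_cons_cons.mp hch).1
        have hch₂ : List.Chain' (fun x y => x*y < 0) (x :: s₂) := (List.isChain_cons_cons.mp hch).2
        have hsub₁ : (x::s₂) <+ t := sub_tail hsl
        cases t with
        | nil => simp at hsub₁
        | cons b t₂ =>
          have ha : a ≠ 0 := hnz a (by simp)
          have hb : b ≠ 0 := hnz b (by simp)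
          simp only [List.headI] at hhead
          by_cases hab : a * b < 0
          · -- sign change at the front
            have hxb : 0 < x * b := by nlinarith [mul_pos (neg_pos.mpr hhx) (neg_pos.mpr hab), sq_nonneg h, mul_pos hhead (neg_pos.mpr hab)]
            have := IH (b::t₂) (x::s₂) (by simp only [List.length_cons] at hlen ⊢; omega)
              (fun y hy => hnz y (List.mem_cons_of_mem _ hy)) hsub₁ hch₂ (by simpa using hxb)
            rw [chg_cons_cons]
            simp only [if_pos hab]
            simp only [List.length_cons] at this ⊢
            omega
          · have hab' : 0 < a * b := (mul_ne_zero ha hb).lt_or_gt.resolve_left (by simpa using hab)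
            have hlen₂ : (b::t₂).length ≤ N := by simp only [List.length_cons] at hlen ⊢; omega
            have hchg : chg (a::b::t₂) = chg (b::t₂) := by rw [chg_cons_cons, if_neg hab]; omega
            -- where does h sit?
            cases hsl with
            | cons _ hsl' =>
              -- s entirely inside b::t₂
              have hhb : 0 < h * b := sign_trans3 hhead hab'
              have := IH (b::t₂) (h::x::s₂) hlen₂ (fun y hy => hnz y (List.mem_cons_of_mem _ hy))
                hsl' hch (by simpa using hhb)
              omega
            | cons_cons _ hsl' =>
              -- h = a, and x::s₂ <+ b::t₂; but x has opposite sign to b, so x::s₂ <+ t₂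
              have hxb : x * b < 0 := sign_trans' (by nlinarith [sq_nonneg a] : x * a < 0) hab'
              have hsub₂ : (x::s₂) <+ t₂ := by
                cases hsl' with
                | cons _ h' => exact h'
                | cons_cons _ h' => nlinarith [sq_nonneg x]
              have := IH (a::t₂) (a::x::s₂) (by simp at hlen ⊢; omega)
                (fun y hy => hnz y (by simp at hy ⊢; tauto)) (hsub₂.cons_cons a)
                hch (by simp; nlinarith [sq_nonneg a])
              rw [hchg, ← chg_cons_of_pos hab' t₂]
              simpa using this

lemma lower_of_alt : ∀ l s : List ℝ, (∀ x ∈ l, x ≠ 0) → s <+ l →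
    s.Chain' (fun x y => x*y < 0) → s.length ≤ chg l + 1 := by
  intro l
  induction l with
  | nil => intro s _ hsl _; simp [List.sublist_nil.mp hsl]
  | cons a t IH =>
    intro s hnz hsl hch
    cases s with
    | nil => simp
    | cons h s₁ =>
      cases hsl with
      | cons _ hsl' =>
        have := IH (h::s₁) (fun y hy => hnz y (List.mem_cons_of_mem _ hy)) hsl' hch
        have := chg_le_cons a t
        omega
      | cons_cons _ hsl' =>
        have ha : a ≠ 0 := hnz a (by simp)
        exact aux_lower (a::t).length (a::t) (a::s₁) le_rfl hnz (hsl'.cons_cons a) hch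
          (by simpa using mul_self_pos.mpr ha)

/-- Final form of the lower bound, for arbitrary lists (zeros get filtered). -/
lemma length_le_signChanges (l s : List ℝ) (hs : s <+ l) (hnz : ∀ x ∈ s, x ≠ 0)
    (hch : s.Chain' (fun x y => x*y < 0)) :
    s.length ≤ chg (l.filter (fun x => decide (x ≠ 0))) + 1 := by
  have h1 : s.filter (fun x => decide (x ≠ 0)) = s := List.filter_eq_self.mpr (by simpa using hnz)
  have h2 : s <+ l.filter (fun x => decide (x ≠ 0)) := h1 ▸ hs.filter _
  exact lower_of_alt _ s (fun x hx => by simpa using (List.mem_filter.mp hx).2) h2 hch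

lemma getLastD_cons_ne {s : List ℝ} (hs : s ≠ []) (a d : ℝ) :
    (a::s).getLastD d = s.getLastD d := by
  cases s with
  | nil => exact absurd rfl hs
  | cons b t => simp [List.getLastD_cons]

/-- Extraction: from a list of nonzeros, an alternating sublist of full length,
head- and last- sign-compatible. -/
lemma exists_alt : ∀ l : List ℝ, l ≠ [] → (∀ x ∈ l, x ≠ 0) →
    ∃ s : List ℝ, s <+ l ∧ s ≠ [] ∧ s.length = chg l + 1 ∧
      s.Chain' (fun x y => x*y < 0) ∧ 0 < s.headI * l.headI ∧
      0 < s.getLastD 0 * l.getLastD 0 := by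
  intro l
  induction l with
  | nil => intro h; exact absurd rfl h
  | cons a t IH =>
    intro _ hnz
    have ha : a ≠ 0 := hnz a (by simp)
    cases t with
    | nil =>
      exact ⟨[a], List.Sublist.refl _, by simp, rfl, List.isChain_singleton _,
        by simpa using mul_self_pos.mpr ha, by simpa using mul_self_pos.mpr ha⟩
    | cons b t₂ =>
      obtain ⟨s', hsub, hne, hlen, hch, hhead, hlast⟩ :=
        IH (by simp) (fun y hy => hnz y (List.mem_cons_of_mem _ hy))
      have hb : b ≠ 0 := hnz b (by simp)
      obtain ⟨h', s₂, rfl⟩ : ∃ h' s₂, s' = h' :: s₂ := by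
        cases s' with
        | nil => exact absurd rfl hne
        | cons h' s₂ => exact ⟨h', s₂, rfl⟩
      simp only [List.headI] at hhead
      by_cases hab : a * b < 0
      · refine ⟨a :: h' :: s₂, hsub.cons_cons a, by simp, ?_, ?_, ?_, ?_⟩
        · rw [chg_cons_cons, if_pos hab]; simp only [List.length_cons] at hlen ⊢; omega
        · exact List.isChain_cons_cons.mpr ⟨sign_trans' hab (by rw [mul_comm]; exact hhead), hch⟩
        · simpa using mul_self_pos.mpr ha
        · rw [getLastD_cons_ne (by simp) a 0, getLastD_cons_ne (by simp) a 0]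
          exact hlast
      · have hab' : 0 < a * b := (mul_ne_zero ha hb).lt_or_gt.resolve_left (by simpa using hab)
        refine ⟨h' :: s₂, hsub.trans (List.sublist_cons_self a _), by simp, ?_, hch, ?_, ?_⟩
        · rw [chg_cons_cons, if_neg hab]; omega
        · simpa using sign_trans3 hhead (mul_comm a b ▸ hab')
        · rw [getLastD_cons_ne (by simp) a 0]
          exact hlast

lemma signChanges_eq (l : List ℝ) :
    signChanges l = chg (l.filter (fun x => decide (x ≠ 0))) := rfl

lemma v_eq (P : Polynomial ℝ) (m : ℕ) (h : P.natDegree = m) :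
    v P = signChanges (List.ofFn fun i : Fin (m+1) => P.coeff i) := by subst h; rfl

lemma ofFn_sublist_ofFn (m k : ℕ) (r : ℕ → ℝ) (idx : Fin k → ℕ) (hle : ∀ j, idx j < m)
    (hmono : ∀ j l : Fin k, j < l → idx j < idx l) :
    (List.ofFn fun j : Fin k => r (idx j)) <+ (List.ofFn fun i : Fin m => r i) := by
  apply (List.sublist_iff_exists_fin_orderEmbedding_get_eq).mpr
  have hlen1 : (List.ofFn fun j : Fin k => r (idx j)).length = k := List.length_ofFn
  have hlen2 : (List.ofFn fun i : Fin m => r i).length = m := List.length_ofFn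
  refine ⟨OrderEmbedding.ofStrictMono
    (fun ix => Fin.cast hlen2.symm ⟨idx (Fin.cast hlen1 ix), hle _⟩) ?_, ?_⟩
  · intro a b hab
    have h3 : idx (Fin.cast hlen1 a) < idx (Fin.cast hlen1 b) := hmono _ _ hab
    simpa [Fin.lt_def] using h3
  · intro ix
    rw [List.get_ofFn, List.get_ofFn]
    rfl

/-- Multiplication lemma for alternations (Descartes's strategy): for `α > 0`,
multiplying a nonzero polynomial `Q` by `X - α` strictly increases the number
of sign alternations: `v((X - α)·Q) ≥ v(Q) + 1`. -/
theorem v_mul_X_sub_C (Q : Polynomial ℝ) (hQ : Q ≠ 0) (α : ℝ) (hα : 0 < α) :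
    v Q + 1 ≤ v ((Polynomial.X - Polynomial.C α) * Q) := by
  set n := Q.natDegree with hn
  set R := (Polynomial.X - Polynomial.C α) * Q with hR
  have hX : (Polynomial.X - Polynomial.C α : Polynomial ℝ) ≠ 0 := Polynomial.X_sub_C_ne_zero α
  have hR0 : R ≠ 0 := mul_ne_zero hX hQ
  have hdeg : R.natDegree = n + 1 := by
    rw [hR, Polynomial.natDegree_mul hX hQ, Polynomial.natDegree_X_sub_C]; omega
  have hlead : Q.coeff n ≠ 0 := Polynomial.leadingCoeff_ne_zero.mpr hQ
  have hc0 : R.coeff 0 = -(α * Q.coeff 0) := by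
    rw [hR, Polynomial.mul_coeff_zero]
    simp
  have hcs : ∀ i, R.coeff (i+1) = Q.coeff i - α * Q.coeff (i+1) := by
    intro i
    rw [hR, sub_mul, Polynomial.coeff_sub, Polynomial.coeff_X_mul, Polynomial.coeff_C_mul]
  have htop : R.coeff (n+1) = Q.coeff n := by
    rw [hcs n, Polynomial.coeff_eq_zero_of_natDegree_lt (by omega : Q.natDegree < n+1)]
    ring
  -- partial sums identity
  have hsum : ∀ m, ∑ i ∈ Finset.range (m+1), α^i * R.coeff i = -(α^(m+1) * Q.coeff m) := by
    intro m
    induction m with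
    | zero => simp [hc0]
    | succ m ih => rw [Finset.sum_range_succ, ih, hcs m]; ring
  have hseg : ∀ m₁ m₂, m₁ < m₂ →
      ∑ i ∈ Finset.Ico (m₁+1) (m₂+1), α^i * R.coeff i
        = α^(m₁+1) * Q.coeff m₁ - α^(m₂+1) * Q.coeff m₂ := by
    intro m₁ m₂ h
    have h2 : (∑ i ∈ Finset.range (m₁+1), α^i * R.coeff i)
        + ∑ i ∈ Finset.Ico (m₁+1) (m₂+1), α^i * R.coeff i
        = ∑ i ∈ Finset.range (m₂+1), α^i * R.coeff i := by
      rw [Finset.range_eq_Ico, Finset.range_eq_Ico]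
      exact Finset.sum_Ico_consecutive (fun i => α^i * R.coeff i) (Nat.zero_le (m₁+1)) (by omega : m₁+1 ≤ m₂+1)
    linarith [hsum m₁, hsum m₂]
  -- coefficient list of Q
  set L : List ℝ := List.ofFn (fun i : Fin (n+1) => Q.coeff i) with hL
  set L' : List ℝ := L.filter (fun x => decide (x ≠ 0)) with hL'
  have hLsplit : L = (List.ofFn fun i : Fin n => Q.coeff i.castSucc) ++ [Q.coeff n] := by
    rw [hL, List.ofFn_succ']
    simp [List.concat_eq_append]
  have hLlast : L'.getLastD 0 = Q.coeff n := by
    rw [hL', hLsplit, List.filter_append]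
    rw [show List.filter (fun x => decide (x ≠ 0)) [Q.coeff n] = [Q.coeff n] by simp [hlead]]
    exact List.getLastD_concat
  have hL'nz : ∀ x ∈ L', x ≠ 0 := fun x hx => by simpa using (List.mem_filter.mp hx).2
  have hL'ne : L' ≠ [] := by
    intro h
    rw [h] at hLlast
    exact hlead hLlast.symm
  have hvQ : v Q = chg L' := rfl
  obtain ⟨s, hsub, hsne, hslen, hsch, _, hslast⟩ := exists_alt L' hL'ne hL'nz
  rw [← hvQ] at hslen
  have hsL : s <+ L := hsub.trans List.filter_sublist
  obtain ⟨f, hf⟩ := (List.sublist_iff_exists_fin_orderEmbedding_get_eq).mp hsL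
  have hLlen : L.length = n + 1 := List.length_ofFn
  -- index sequence
  set I : Fin (v Q + 1) → ℕ := fun j => ((f (Fin.cast hslen.symm j)) : ℕ) with hI
  have hget : ∀ k : Fin L.length, L.get k = Q.coeff ((k : ℕ)) := by
    intro k
    exact (List.get_ofFn (fun i : Fin (n+1) => Q.coeff i) k).trans rfl
  have hIval : ∀ j, Q.coeff (I j) = s.get (Fin.cast hslen.symm j) := by
    intro j
    rw [hf (Fin.cast hslen.symm j), hget]
  have hIle : ∀ j, I j ≤ n := by
    intro j
    show ((f (Fin.cast hslen.symm j) : Fin L.length) : ℕ) ≤ n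
    have h1 := (f (Fin.cast hslen.symm j)).isLt
    omega
  have hImono : ∀ j k : Fin (v Q + 1), j < k → I j < I k := by
    intro j k hjk
    have : Fin.cast hslen.symm j < Fin.cast hslen.symm k := hjk
    exact f.strictMono this
  have hQnz : ∀ j, Q.coeff (I j) ≠ 0 := by
    intro j
    rw [hIval j]
    exact hL'nz _ (hsub.subset (s.get_mem _))
  have hadj : ∀ (k l : Fin (v Q + 1)), (l : ℕ) = (k : ℕ) + 1 →
      Q.coeff (I k) * Q.coeff (I l) < 0 := by
    intro k l hkl
    have hc := List.isChain_iff_getElem.mp hsch (k : ℕ) (by have := l.isLt; omega)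
    rw [hIval k, hIval l]
    simp only [List.get_eq_getElem, Fin.val_cast]
    convert hc using 3 <;>
      first
        | omega
        | (apply Fin.ext; simp [Fin.cast]; omega)
        | (apply Fin.ext; simp [Fin.cast])
  have hlastval : 0 < Q.coeff (I ⟨v Q, Nat.lt_succ_self _⟩) * Q.coeff n := by
    have h1 : s.getLastD 0 = s.get ⟨s.length - 1, by
        cases s with | nil => exact absurd rfl hsne | cons a t => simp⟩ := by
      rw [List.getLastD_eq_getLast?, List.getLast?_eq_getLast hsne, Option.getD_some]
      exact List.getLast_eq_getElem hsne
    rw [hLlast, h1] at hslast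
    rw [hIval]
    convert hslast using 3
    simp [Fin.cast, hslen]
  -- choose sign witnesses for R between consecutive alternation indices of Q
  have hsel : ∀ j : Fin (v Q + 1), ∃ q : ℕ, q ≤ I j ∧
      (∀ k : Fin (v Q + 1), k < j → I k < q) ∧ R.coeff q * Q.coeff (I j) < 0 := by
    intro j
    have hsummul : ∀ (t : Finset ℕ) (c : ℝ),
        ∑ i ∈ t, α^i * (R.coeff i * c) = (∑ i ∈ t, α^i * R.coeff i) * c := by
      intro t c
      rw [Finset.sum_mul]
      exact Finset.sum_congr rfl (fun i _ => by ring)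
    by_cases hj : (j : ℕ) = 0
    · have key : ∑ i ∈ Finset.range (I j + 1), α^i * (R.coeff i * Q.coeff (I j)) < 0 := by
        rw [hsummul, hsum (I j)]
        nlinarith [mul_pos (pow_pos hα (I j + 1)) (mul_self_pos.mpr (hQnz j))]
      obtain ⟨q, hqmem, hq⟩ := Finset.exists_lt_of_sum_lt
        (g := fun _ => (0:ℝ)) (by simpa using key)
      refine ⟨q, by have := Finset.mem_range.mp hqmem; omega, ?_, ?_⟩
      · intro k hk
        exact absurd (Fin.lt_def.mp hk) (by omega)
      · nlinarith [pow_pos hα q]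
    · set k₀ : Fin (v Q + 1) := ⟨(j : ℕ) - 1, by omega⟩ with hk₀
      have hk₀lt : k₀ < j := by apply Fin.lt_def.mpr; show (j:ℕ) - 1 < j; omega
      have hm₁m₂ : I k₀ < I j := hImono _ _ hk₀lt
      have hadjj : Q.coeff (I k₀) * Q.coeff (I j) < 0 :=
        hadj k₀ j (by simp [hk₀]; omega)
      have key : ∑ i ∈ Finset.Ico (I k₀ + 1) (I j + 1),
          α^i * (R.coeff i * Q.coeff (I j)) < 0 := by
        rw [hsummul, hseg _ _ hm₁m₂]
        nlinarith [mul_pos (pow_pos hα (I k₀ + 1)) (neg_pos.mpr hadjj),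
          mul_pos (pow_pos hα (I j + 1)) (mul_self_pos.mpr (hQnz j))]
      obtain ⟨q, hqmem, hq⟩ := Finset.exists_lt_of_sum_lt
        (g := fun _ => (0:ℝ)) (by simpa using key)
      obtain ⟨hq1, hq2⟩ := Finset.mem_Ico.mp hqmem
      refine ⟨q, by omega, ?_, by nlinarith [pow_pos hα q]⟩
      intro k hk
      have hkle : (k : ℕ) ≤ (j : ℕ) - 1 := by have := Fin.lt_def.mp hk; omega
      rcases eq_or_lt_of_le hkle with heq | hlt
      · have hkk : k = k₀ := Fin.ext heq
        rw [hkk]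
        omega
      · have : I k < I k₀ := hImono k k₀ (by apply Fin.lt_def.mpr; simpa [hk₀] using hlt)
        omega
  choose p hp1 hp2 hp3 using hsel
  have hvR : v R = signChanges (List.ofFn fun i : Fin (n+1+1) => R.coeff i) := v_eq R (n+1) hdeg
  set idx : Fin (v Q + 2) → ℕ := fun j =>
    if h : (j : ℕ) < v Q + 1 then p ⟨(j : ℕ), h⟩ else n + 1 with hidx
  have hidxeq1 : ∀ (j : ℕ) (h : j < v Q + 1) (h' : j < v Q + 2),
      idx ⟨j, h'⟩ = p ⟨j, h⟩ := by
    intro j h h'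
    rw [hidx]
    exact dif_pos h
  have hidxeq2 : ∀ (j : ℕ) (h : ¬ j < v Q + 1) (h' : j < v Q + 2),
      idx ⟨j, h'⟩ = n + 1 := by
    intro j h h'
    rw [hidx]
    exact dif_neg h
  have hidxle : ∀ j, idx j < n + 2 := by
    intro j
    rcases j with ⟨j, hj⟩
    by_cases h : j < v Q + 1
    · rw [hidxeq1 j h hj]
      have := hp1 ⟨j, h⟩
      have := hIle ⟨j, h⟩
      omega
    · rw [hidxeq2 j h hj]
      omega
  have hidxmono : ∀ j k : Fin (v Q + 2), j < k → idx j < idx k := by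
    intro j k hjk
    have hjk' : (j:ℕ) < (k:ℕ) := hjk
    rcases j with ⟨j, hj⟩
    rcases k with ⟨k, hk⟩
    simp only at hjk'
    by_cases h1 : j < v Q + 1
    · by_cases h2 : k < v Q + 1
      · rw [hidxeq1 j h1 hj, hidxeq1 k h2 hk]
        have ha := hp1 ⟨j, h1⟩
        have hb := hp2 ⟨k, h2⟩ ⟨j, h1⟩ (by apply Fin.lt_def.mpr; simpa)
        omega
      · rw [hidxeq1 j h1 hj, hidxeq2 k h2 hk]
        have := hp1 ⟨j, h1⟩
        have := hIle ⟨j, h1⟩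
        omega
    · exfalso; omega
  have hvalnz : ∀ j : Fin (v Q + 2), R.coeff (idx j) ≠ 0 := by
    intro j
    rcases j with ⟨j, hj⟩
    by_cases h : j < v Q + 1
    · rw [hidxeq1 j h hj]
      intro h0
      have := hp3 ⟨j, h⟩
      rw [h0, zero_mul] at this
      exact lt_irrefl 0 this
    · rw [hidxeq2 j h hj, htop]
      exact hlead
  have hchain : ∀ (i : ℕ) (hi : i + 1 < v Q + 2),
      R.coeff (idx ⟨i, by omega⟩) * R.coeff (idx ⟨i+1, hi⟩) < 0 := by
    intro i hi
    by_cases hi1 : i + 1 < v Q + 1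
    · rw [hidxeq1 i (by omega) (by omega), hidxeq1 (i+1) hi1 hi]
      exact sign_trans (hp3 ⟨i, by omega⟩) (hp3 ⟨i+1, hi1⟩)
        (hadj ⟨i, by omega⟩ ⟨i+1, hi1⟩ rfl)
    · have hieq : i = v Q := by omega
      subst hieq
      rw [hidxeq1 (v Q) (by omega) (by omega), hidxeq2 (v Q + 1) hi1 hi, htop]
      exact sign_trans' (hp3 ⟨v Q, by omega⟩) hlastval
  -- assemble the alternating sublist of R's coefficient list
  have hsubR : (List.ofFn fun j : Fin (v Q + 2) => R.coeff (idx j))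
      <+ (List.ofFn fun i : Fin (n+1+1) => R.coeff i) :=
    ofFn_sublist_ofFn (n+1+1) (v Q + 2) R.coeff idx hidxle hidxmono
  have hnzR : ∀ x ∈ (List.ofFn fun j : Fin (v Q + 2) => R.coeff (idx j)), x ≠ 0 := by
    intro x hx
    obtain ⟨j, rfl⟩ := List.mem_ofFn.mp hx
    exact hvalnz j
  have hchR : (List.ofFn fun j : Fin (v Q + 2) => R.coeff (idx j)).Chain'
      (fun x y => x*y<0) := by
    apply List.isChain_ofFn.mpr
    intro i hi
    exact hchain i hi
  have hfin := length_le_signChanges _ _ hsubR hnzR hchR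
  rw [hvR, signChanges_eq]
  rw [List.length_ofFn] at hfin
  omega
end

section
/- Multiplication lemma for permanences: for every nonzero real polynomial Q and every real α > 0, the polynomial (X + α)·Q(X) has strictly more sign permanences than Q; that is, c((X + α)·Q) ≥ c(Q) + 1. -/
open Polynomial

noncomputable def fno (l : List ℝ) : ℝ := (l.filter (fun x => decide (x ≠ 0))).headI

lemma fno_nil : fno ([] : List ℝ) = 0 := rfl

lemma fno_cons_zero (l : List ℝ) : fno (0 :: l) = fno l := by
  simp [fno, List.filter_cons]

lemma fno_cons (x : ℝ) (hx : x ≠ 0) (l : List ℝ) : fno (x :: l) = x := by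
  simp [fno, List.filter_cons, hx]

lemma sc_nil : signChanges ([] : List ℝ) = 0 := rfl

lemma sc_cons_zero (l : List ℝ) : signChanges (0 :: l) = signChanges l := by
  simp [signChanges, List.filter_cons]

lemma sc_cons (x : ℝ) (hx : x ≠ 0) (l : List ℝ) :
    signChanges (x :: l) = signChanges l + (if x * fno l < 0 then 1 else 0) := by
  have hfil : (x :: l).filter (fun x => decide (x ≠ 0)) = x :: l.filter (fun x => decide (x ≠ 0)) := by
    simp [List.filter_cons, hx]
  unfold signChanges fno
  rw [hfil]
  cases h : l.filter (fun x => decide (x ≠ 0)) with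
  | nil =>
      have : (default : ℝ) = 0 := rfl
      simp [this]
  | cons y r =>
      simp only [List.tail_cons, List.zip_cons_cons, List.countP_cons, List.headI,
        decide_eq_true_eq]
      congr

lemma sign_trans_s6 {a b c : ℝ} (hab : 0 < a * b) : (a * c < 0 ↔ b * c < 0) := by
  constructor <;> intro h <;> by_contra h' <;> push_neg at h'
  · nlinarith [mul_neg_of_pos_of_neg hab h, mul_nonneg (sq_nonneg a) h']
  · nlinarith [mul_neg_of_pos_of_neg hab h, mul_nonneg (sq_nonneg b) h']

lemma sign_trans'_s6 {a b c : ℝ} (hab : a * b < 0) (hac : a * c < 0) : 0 < b * c := by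
  by_contra h'
  push_neg at h'
  nlinarith [mul_pos_of_neg_of_neg hab hac, mul_nonpos_of_nonneg_of_nonpos (sq_nonneg a) h']

/-- coefficient list of `(X - β) * R` from that of `R`. -/
noncomputable def dl (β : ℝ) : List ℝ → List ℝ
  | [] => [0]
  | x :: t => (-(β * x)) :: (x + (dl β t).headI) :: (dl β t).tail

lemma key (β : ℝ) (hβ : 0 < β) :
    ∀ a : List ℝ, a.getLastD 0 ≠ 0 →
      signChanges a + 1 ≤ signChanges (dl β a) ∧ fno (dl β a) * fno a < 0 := by
  intro a
  induction a with
  | nil => intro h; simp at h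
  | cons x t ih =>
      intro hlast
      cases t with
      | nil =>
          -- a = [x], x ≠ 0
          have hx : x ≠ 0 := by simpa using hlast
          have hdl : dl β [x] = [-(β * x), x] := by simp [dl]
          have hbx : -(β * x) ≠ 0 := by
            intro h; apply hx; nlinarith [neg_eq_zero.mp h]
          rw [hdl]
          have h1 : signChanges [x] = 0 := by
            rw [sc_cons x hx, sc_nil, fno_nil]; simp
          have h2 : signChanges [-(β*x), x] = 1 := by
            have hneg : -(β*x) * x < 0 := by nlinarith [mul_self_pos.mpr hx]
            rw [sc_cons _ hbx, h1, fno_cons x hx, if_pos hneg]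
          constructor
          · rw [h1, h2]
          · rw [fno_cons _ hbx, fno_cons x hx]
            nlinarith [mul_self_pos.mpr hx]
      | cons t0 t' =>
          have hlast' : (t0 :: t').getLastD 0 ≠ 0 := by
            rw [List.getLastD_cons, List.getLastD_cons] at hlast
            rw [List.getLastD_cons]
            exact hlast
          obtain ⟨h1, h2⟩ := ih hlast'
          -- notation
          set t : List ℝ := t0 :: t' with ht
          have hDshape : dl β t = (-(β * t0)) :: ((t0 + (dl β t').headI) :: (dl β t').tail) := by
            simp [ht, dl]
          set rr : List ℝ := (t0 + (dl β t').headI) :: (dl β t').tail with hrr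
          have hL : dl β (x :: t) = (-(β * x)) :: (x + -(β * t0)) :: rr := by
            rw [show dl β (x :: t) = (-(β * x)) :: (x + (dl β t).headI) :: (dl β t).tail from by simp [dl],
              hDshape]
            simp
          rcases eq_or_ne x 0 with hx | hx
          · -- x = 0
            subst hx
            rw [hL]
            have e1 : -(β * (0:ℝ)) = 0 := by ring
            have e2 : (0:ℝ) + -(β * t0) = -(β * t0) := by ring
            rw [e1, e2, sc_cons_zero, fno_cons_zero, sc_cons_zero, fno_cons_zero, ← hDshape]
            exact ⟨h1, h2⟩
          · -- x ≠ 0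
            have hbx : -(β * x) ≠ 0 := by
              simp only [neg_ne_zero]; exact mul_ne_zero (ne_of_gt hβ) hx
            have hfnoL : fno (dl β (x :: t)) = -(β * x) := by
              rw [hL, fno_cons _ hbx]
            have hgoal2 : fno (dl β (x :: t)) * fno (x :: t) < 0 := by
              rw [hfnoL, fno_cons x hx]
              nlinarith [mul_self_pos.mpr hx]
            refine ⟨?_, hgoal2⟩
            rcases eq_or_ne t0 0 with ht0 | ht0
            · -- t0 = 0
              subst ht0
              have e1 : -(β * (0:ℝ)) = 0 := by ring
              have hD0 : dl β t = 0 :: rr := by rw [hDshape, e1]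
              have hVD : signChanges (dl β t) = signChanges rr := by rw [hD0, sc_cons_zero]
              have hfD : fno (dl β t) = fno rr := by rw [hD0, fno_cons_zero]
              rw [hVD] at h1
              rw [hL, e1]
              have e2 : x + (0:ℝ) = x := by ring
              rw [e2]
              rw [sc_cons _ hbx, sc_cons x hx, fno_cons x hx]
              rw [sc_cons x hx]
              have hneg : -(β*x) * x < 0 := by nlinarith [mul_self_pos.mpr hx]
              rw [if_pos hneg]
              have hb1 : (if x * fno t < 0 then 1 else 0) ≤ 1 := by split <;> omega
              have hb2 : (0:ℕ) ≤ (if x * fno rr < 0 then 1 else 0) := by omega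
              omega
            · -- t0 ≠ 0
              have hy : -(β * t0) ≠ 0 := by
                simp only [neg_ne_zero]; exact mul_ne_zero (ne_of_gt hβ) ht0
              have hfnt : fno t = t0 := fno_cons t0 ht0 t'
              have hVD : signChanges (dl β t)
                  = signChanges rr + (if -(β * t0) * fno rr < 0 then 1 else 0) := by
                rw [hDshape, sc_cons _ hy]
              rw [hVD] at h1
              rw [hL, sc_cons _ hbx, sc_cons x hx, hfnt]
              rcases lt_trichotomy (x * t0) 0 with hxt | hxt | hxt
              · -- opposite signs: x*y > 0, w same sign as x
                have hxy : 0 < x * -(β * t0) := by nlinarith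
                have hxw : 0 < x * (x + -(β * t0)) := by nlinarith [mul_self_pos.mpr hx]
                have hwne : (x + -(β * t0)) ≠ 0 := by
                  intro h; rw [h, mul_zero] at hxw; exact lt_irrefl 0 hxw
                rw [sc_cons _ hwne, fno_cons _ hwne]
                have hbw : -(β * x) * (x + -(β * t0)) < 0 := by nlinarith
                rw [if_pos hbw, if_pos hxt]
                have hiff : ((x + -(β * t0)) * fno rr < 0) ↔ (-(β * t0) * fno rr < 0) := by
                  have h0 : 0 < (x + -(β * t0)) * -(β * t0) := by
                    nlinarith [mul_pos hxw hxy, sq_nonneg x, mul_self_pos.mpr hx]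
                  exact sign_trans_s6 h0
                rw [if_congr hiff rfl rfl]
                omega
              · exact absurd hxt (mul_ne_zero hx ht0)
              · -- same sign: x*y < 0
                have hxy : x * -(β * t0) < 0 := by nlinarith
                rw [if_neg (not_lt.mpr (le_of_lt hxt))]
                rcases eq_or_ne (x + -(β * t0)) 0 with hw0 | hw0
                · rw [hw0, sc_cons_zero, fno_cons_zero]
                  have hiff : (-(β * x) * fno rr < 0) ↔ (-(β * t0) * fno rr < 0) := by
                    apply sign_trans_s6
                    nlinarith
                  rw [if_congr hiff rfl rfl]
                  omega
                · rw [sc_cons _ hw0, fno_cons _ hw0]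
                  rcases lt_trichotomy (x * (x + -(β * t0))) 0 with hxw | hxw | hxw
                  · -- w on y's side
                    have hb2 : ¬ (-(β * x) * (x + -(β * t0)) < 0) := by nlinarith
                    rw [if_neg hb2]
                    have hiff : ((x + -(β * t0)) * fno rr < 0) ↔ (-(β * t0) * fno rr < 0) := by
                      exact sign_trans_s6 (sign_trans'_s6 hxw hxy)
                    rw [if_congr hiff rfl rfl]
                    omega
                  · exact absurd hxw (mul_ne_zero hx hw0)
                  · -- w on x's side
                    have hb2 : -(β * x) * (x + -(β * t0)) < 0 := by nlinarith
                    rw [if_pos hb2]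
                    have hle : (if -(β * t0) * fno rr < 0 then 1 else 0) ≤ 1 := by split <;> omega
                    have hge : (0:ℕ) ≤ (if (x + -(β * t0)) * fno rr < 0 then 1 else 0) := by omega
                    omega

lemma headI_eq_getD (l : List ℝ) : l.headI = l.getD 0 0 := by cases l <;> rfl

lemma tail_getD (l : List ℝ) (j : ℕ) : l.tail.getD j 0 = l.getD (j+1) 0 := by
  cases l <;> simp

lemma dl_length (β : ℝ) (a : List ℝ) : (dl β a).length = a.length + 1 := by
  induction a with
  | nil => rfl
  | cons x t ih =>
      simp only [dl, List.length_cons, List.length_tail, ih]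
      omega

lemma dl_getD_zero (β : ℝ) (a : List ℝ) : (dl β a).getD 0 0 = -(β * a.getD 0 0) := by
  cases a with
  | nil => simp [dl]
  | cons x t => rfl

lemma dl_getD_succ (β : ℝ) (a : List ℝ) (k : ℕ) :
    (dl β a).getD (k+1) 0 = a.getD k 0 - β * a.getD (k+1) 0 := by
  induction a generalizing k with
  | nil => simp [dl]
  | cons x t ih =>
      cases k with
      | zero =>
          show ((x + (dl β t).headI) :: (dl β t).tail).getD 0 0 = _
          simp only [List.getD_cons_zero, headI_eq_getD, dl_getD_zero]
          simp [List.getD_cons_succ]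
          ring
      | succ j =>
          show ((x + (dl β t).headI) :: (dl β t).tail).getD (j+1) 0 = _
          rw [List.getD_cons_succ, tail_getD, ih]
          simp [List.getD_cons_succ]

lemma getD_coeff (R : Polynomial ℝ) (k : ℕ) :
    (List.ofFn fun i : Fin (R.natDegree + 1) => R.coeff i).getD k 0 = R.coeff k := by
  by_cases h : k < R.natDegree + 1
  · rw [List.getD_eq_getElem _ _ (by simpa using h)]
    rw [List.getElem_ofFn]
  · rw [List.getD_eq_default _ _ (by simpa using Nat.le_of_not_lt h)]
    exact (Polynomial.coeff_eq_zero_of_natDegree_lt (by omega)).symm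

lemma coeffList_mul (β : ℝ) (R : Polynomial ℝ) (hR : R ≠ 0) :
    (List.ofFn fun i : Fin (((X - C β) * R).natDegree + 1) => ((X - C β) * R).coeff i)
      = dl β (List.ofFn fun i : Fin (R.natDegree + 1) => R.coeff i) := by
  have hXC : (X - C β : Polynomial ℝ) ≠ 0 := Polynomial.X_sub_C_ne_zero β
  have hdeg : ((X - C β) * R).natDegree = R.natDegree + 1 := by
    rw [Polynomial.natDegree_mul hXC hR, Polynomial.natDegree_X_sub_C]
    omega
  have hc0 : ((X - C β) * R).coeff 0 = -(β * R.coeff 0) := by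
    rw [Polynomial.mul_coeff_zero]
    simp [Polynomial.coeff_sub]
  have hcs : ∀ k, ((X - C β) * R).coeff (k+1) = R.coeff k - β * R.coeff (k+1) := by
    intro k
    rw [sub_mul, Polynomial.coeff_sub, Polynomial.coeff_X_mul, Polynomial.coeff_C_mul]
  apply List.ext_getElem
  · simp [dl_length, hdeg]
  · intro i h1 h2
    rw [List.getElem_ofFn]
    rw [← List.getD_eq_getElem _ 0 h2]
    cases i with
    | zero => rw [dl_getD_zero, getD_coeff, hc0]
    | succ j => rw [dl_getD_succ, getD_coeff, getD_coeff, hcs]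

lemma fno_map_neg (l : List ℝ) : fno (l.map (fun x => -x)) = -(fno l) := by
  induction l with
  | nil => simp [fno, show (default : ℝ) = 0 from rfl]
  | cons x t ih =>
      by_cases hx : x = 0
      · subst hx; simpa [fno, List.filter_cons] using ih
      · simp [fno, List.filter_cons, hx]

lemma sc_map_neg (l : List ℝ) : signChanges (l.map (fun x => -x)) = signChanges l := by
  have hfil : (l.map (fun x => -x)).filter (fun x => decide (x ≠ 0))
      = (l.filter (fun x => decide (x ≠ 0))).map (fun x => -x) := by
    rw [List.filter_map]
    congr 1
    apply List.filter_congr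
    intro x _
    simp
  unfold signChanges
  rw [hfil]
  generalize (l.filter (fun x => decide (x ≠ 0))) = m
  dsimp only
  rw [← List.map_tail, List.zip_map, List.countP_map]
  apply List.countP_congr
  intro p _
  simp only [Function.comp, Prod.map]
  constructor <;> intro h <;> simp_all

lemma v_neg (S : Polynomial ℝ) : v (-S) = v S := by
  unfold v
  simp only [Polynomial.natDegree_neg, Polynomial.coeff_neg, Fin.coe_cast]
  rw [show (List.ofFn fun i : Fin (S.natDegree + 1) => -S.coeff i)
      = (List.ofFn fun i : Fin (S.natDegree + 1) => S.coeff i).map (fun x => -x) by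
    rw [List.map_ofFn]; rfl]
  exact sc_map_neg _

lemma getLastD_ofFn_coeff (R : Polynomial ℝ) :
    (List.ofFn fun i : Fin (R.natDegree + 1) => R.coeff i).getLastD 0
      = R.coeff R.natDegree := by
  have hne : (List.ofFn fun i : Fin (R.natDegree + 1) => R.coeff i) ≠ [] := by
    simp [List.ofFn_eq_nil_iff]
  rw [List.getLastD_eq_getLast?, List.getLast?_eq_getLast hne, Option.getD_some,
    List.getLast_ofFn]
  norm_num

/-- Multiplication lemma for permanences: for `α > 0`, multiplying a nonzero
polynomial `Q` by `X + α` strictly increases the number of sign permanences: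
`c((X + α)·Q) ≥ c(Q) + 1`. -/
theorem c_mul_X_add_C (Q : Polynomial ℝ) (hQ : Q ≠ 0) (α : ℝ) (hα : 0 < α) :
    c Q + 1 ≤ c ((Polynomial.X + Polynomial.C α) * Q) := by
  classical
  have hR : Q.comp (-X) ≠ 0 := by
    intro h
    apply hQ
    have h2 : (Q.comp (-X)).comp (-X) = Q := by
      rw [Polynomial.comp_assoc]
      simp
    rw [h] at h2
    simpa using h2.symm
  have hcomp : ((X + C α) * Q).comp (-X) = -((X - C α) * Q.comp (-X)) := by
    rw [Polynomial.mul_comp, Polynomial.add_comp, Polynomial.X_comp, Polynomial.C_comp]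
    ring
  have hlast : (List.ofFn fun i : Fin ((Q.comp (-X)).natDegree + 1) =>
      (Q.comp (-X)).coeff i).getLastD 0 ≠ 0 := by
    rw [getLastD_ofFn_coeff]
    exact Polynomial.leadingCoeff_ne_zero.mpr hR
  have hmain := (key α hα _ hlast).1
  rw [← coeffList_mul α (Q.comp (-X)) hR] at hmain
  unfold c
  rw [hcomp, v_neg]
  exact hmain
end

section
/- Fourier's rule (negative part): for every nonzero real polynomial P, the number of negative real roots of P counted with multiplicity has the same parity as the number of sign permanences of P; that is, z⁻(P) ≡ c(P) (mod 2). -/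
open Polynomial

/-! ### Auxiliary lemmas -/

section Aux

/-- Sign parity of a list of nonzero reals: `(-1)^(number of sign changes)` has the
sign of `head * last`. -/
lemma sign_parity_aux : ∀ (t : List ℝ) (a : ℝ), a ≠ 0 → (∀ x ∈ t, x ≠ 0) →
    0 < (-1 : ℝ) ^ (((a :: t).zip t).countP (fun p => decide (p.1 * p.2 < 0))) *
      (a * (a :: t).getLast (List.cons_ne_nil a t))
  | [], a, ha, _ => by simpa using mul_self_pos.2 ha
  | b :: t, a, ha, h => by
    have hb : b ≠ 0 := h b (by simp)
    have IH := sign_parity_aux t b hb (fun x hx => h x (List.mem_cons_of_mem _ hx))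
    have hzip : ((a :: b :: t).zip (b :: t)) = (a, b) :: ((b :: t).zip t) := rfl
    rw [List.getLast_cons (List.cons_ne_nil b t), hzip, List.countP_cons]
    set L := (b :: t).getLast (List.cons_ne_nil b t) with hL
    set m := ((b :: t).zip t).countP (fun p => decide (p.1 * p.2 < 0)) with hm
    rcases lt_or_gt_of_ne (mul_ne_zero ha hb) with hab | hab
    · have : decide ((a, b).1 * (a, b).2 < 0) = true := by simpa using hab
      rw [this]
      norm_num [pow_succ]
      have h2 : (-1 : ℝ) ^ m * (a * L) * (b * b) < 0 := by nlinarith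
      nlinarith [mul_self_pos.2 hb]
    · have : decide ((a, b).1 * (a, b).2 < 0) = false := by simpa using le_of_lt hab
      rw [this]
      norm_num
      have h2 : 0 < (-1 : ℝ) ^ m * (a * L) * (b * b) := by nlinarith
      nlinarith [mul_self_pos.2 hb]

end Aux

section Aux2

lemma head_filter_ofFn : ∀ (n k : ℕ) (f : ℕ → ℝ), k < n → (∀ j, j < k → f j = 0) → f k ≠ 0 →
    ((List.ofFn fun i : Fin n => f i).filter (fun x => decide (x ≠ 0))).head? = some (f k) := by
  intro n
  induction n with
  | zero => intro k f hk; omega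
  | succ n IH =>
    intro k f hk h0 hfk
    rw [List.ofFn_succ, List.filter_cons]
    cases k with
    | zero => simp [hfk]
    | succ k =>
      have h00 : f 0 = 0 := h0 0 (Nat.succ_pos k)
      have := IH k (fun j => f (j + 1)) (by omega) (fun j hj => h0 (j + 1) (by omega)) hfk
      simpa [h00, Fin.val_succ] using this

lemma getLast_filter_ofFn (n : ℕ) (f : ℕ → ℝ) (hfn : f n ≠ 0) :
    ((List.ofFn fun i : Fin (n + 1) => f i).filter (fun x => decide (x ≠ 0))).getLast? =
      some (f n) := by
  rw [List.ofFn_succ']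
  have : ((List.ofFn fun i : Fin n => f i.castSucc).concat (f (Fin.last n))).filter
      (fun x => decide (x ≠ 0)) =
      ((List.ofFn fun i : Fin n => f i.castSucc).filter (fun x => decide (x ≠ 0))).concat
        (f (Fin.last n)) := by
    rw [List.concat_eq_append, List.concat_eq_append, List.filter_append]
    congr 1
    simp [hfn]
  rw [this, List.concat_eq_append, List.getLast?_append]
  simp

end Aux2

section VParity

lemma v_parity (P : Polynomial ℝ) (hP : P ≠ 0) :
    0 < (-1 : ℝ) ^ (v P) * (P.trailingCoeff * P.leadingCoeff) := by
  classical
  set l' := (List.ofFn fun i : Fin (P.natDegree + 1) => P.coeff i).filter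
    (fun x => decide (x ≠ 0)) with hl'
  have hhead : l'.head? = some P.trailingCoeff := by
    have h1 := head_filter_ofFn (P.natDegree + 1) P.natTrailingDegree P.coeff
      (by have := P.natTrailingDegree_le_natDegree; omega)
      (fun j hj => coeff_eq_zero_of_lt_natTrailingDegree hj)
      (coeff_natTrailingDegree_ne_zero.2 hP)
    exact h1
  have hlast : l'.getLast? = some P.leadingCoeff :=
    getLast_filter_ofFn P.natDegree P.coeff (leadingCoeff_ne_zero.2 hP)
  obtain ⟨a, t, hat⟩ : ∃ a t, l' = a :: t := by
    cases h : l' with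
    | nil => rw [h] at hhead; simp at hhead
    | cons a t => exact ⟨a, t, rfl⟩
  rw [hat] at hhead hlast
  have ha : a = P.trailingCoeff := by simpa using hhead
  have hlastv : (a :: t).getLast (List.cons_ne_nil a t) = P.leadingCoeff := by
    rw [List.getLast?_eq_getLast (List.cons_ne_nil a t)] at hlast
    simpa using hlast
  have hmem : ∀ x ∈ a :: t, x ≠ 0 := by
    intro x hx
    have : x ∈ l' := by rw [hat]; exact hx
    exact of_decide_eq_true (List.mem_filter.1 this).2
  have key := sign_parity_aux t a (hmem a (by simp)) (fun x hx => hmem x (by simp [hx]))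
  have hv : v P = ((a :: t).zip t).countP (fun p => decide (p.1 * p.2 < 0)) := by
    show signChanges _ = _
    rw [signChanges]
    simp only [← hl', hat]
    rfl
  rw [hv, ← ha, ← hlastv]
  exact key

end VParity

section ZposParity

open Filter Topology

/-- Sign invariant: `(-1)^(zpos P)` has the sign of `trailingCoeff * leadingCoeff`. -/
def SG (P : Polynomial ℝ) : Prop :=
  0 < (-1 : ℝ) ^ (zpos P) * (P.trailingCoeff * P.leadingCoeff)

lemma zpos_mul {P Q : Polynomial ℝ} (hP : P ≠ 0) (hQ : Q ≠ 0) :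
    zpos (P * Q) = zpos P + zpos Q := by
  classical
  rw [zpos, roots_mul (mul_ne_zero hP hQ), Multiset.filter_add, Multiset.card_add]
  rfl

lemma SG.mul {P Q : Polynomial ℝ} (hP : P ≠ 0) (hQ : Q ≠ 0) (h1 : SG P) (h2 : SG Q) :
    SG (P * Q) := by
  rw [SG, zpos_mul hP hQ, trailingCoeff_mul, leadingCoeff_mul, pow_add]
  rw [SG] at h1 h2
  nlinarith

lemma SG.X_sub_C (r : ℝ) : SG (X - C r) := by
  classical
  have hlead : (X - C r).leadingCoeff = 1 := (monic_X_sub_C r).leadingCoeff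
  have hz : zpos (X - C r) = if 0 < r then 1 else 0 := by
    rw [zpos, roots_X_sub_C, Multiset.filter_singleton]
    split_ifs <;> simp
  rcases eq_or_ne r 0 with hr | hr
  · subst hr
    have hXC : (X - C (0 : ℝ)) = X := by simp
    rw [SG, hz, if_neg (lt_irrefl 0), hXC]
    have htr : (X : Polynomial ℝ).trailingCoeff = 1 := by
      simp [trailingCoeff]
    rw [htr]
    simp
  · have htr : (X - C r).trailingCoeff = -r := by
      have h0 : (X - C r).coeff 0 = -r := by simp
      rw [trailingCoeff, natTrailingDegree_eq_zero_of_constantCoeff_ne_zero, h0]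
      · simp only [constantCoeff_apply]
        rw [h0]
        simpa using hr
    rw [SG, hz, htr, hlead]
    rcases hr.lt_or_gt with h | h
    · rw [if_neg (by linarith)]; simpa using h.le.lt_of_ne (by simpa using hr)
    · rw [if_pos h]; simp [h]
  -- done

lemma SG.prod (s : Multiset ℝ) : SG ((s.map fun r => X - C r).prod) := by
  classical
  induction s using Multiset.induction_on with
  | empty =>
    rw [SG]
    simp [zpos, trailingCoeff]
  | cons r s ih =>
    rw [Multiset.map_cons, Multiset.prod_cons]
    exact SG.mul (X_sub_C_ne_zero r)
      (monic_multiset_prod_of_monic _ _ (fun r _ => monic_X_sub_C r)).ne_zero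
      (SG.X_sub_C r) ih

lemma SG.no_roots {Q : Polynomial ℝ} (hQ : Q ≠ 0) (hroots : Q.roots = 0) : SG Q := by
  have heval : ∀ x : ℝ, Q.eval x ≠ 0 := by
    intro x hx
    have hmem : x ∈ Q.roots := (mem_roots hQ).2 hx
    rw [hroots] at hmem
    simp at hmem
  have h0 : Q.coeff 0 ≠ 0 := by rw [coeff_zero_eq_eval_zero]; exact heval 0
  have htr : Q.trailingCoeff = Q.eval 0 := by
    rw [trailingCoeff, natTrailingDegree_eq_zero_of_constantCoeff_ne_zero h0,
      coeff_zero_eq_eval_zero]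
  have hzp : zpos Q = 0 := by rw [zpos, hroots]; simp
  rw [SG, hzp, pow_zero, one_mul, htr]
  by_cases hdeg : Q.natDegree = 0
  · rw [leadingCoeff, hdeg, coeff_zero_eq_eval_zero]
    exact mul_self_pos.2 (heval 0)
  · have hdeg' : 0 < Q.degree := natDegree_pos_iff_degree_pos.1 (Nat.pos_of_ne_zero hdeg)
    obtain ⟨x0, hx0⟩ : ∃ x0 : ℝ, 0 < Q.leadingCoeff * Q.eval x0 := by
      rcases (leadingCoeff_ne_zero.mpr hQ).lt_or_gt with hl | hl
      · have ht : Tendsto (fun x => (-Q).eval x) atTop atTop :=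
          tendsto_atTop_of_leadingCoeff_nonneg (-Q) (by rwa [degree_neg])
            (by rw [leadingCoeff_neg]; linarith)
        obtain ⟨x0, hx0⟩ := (ht.eventually_gt_atTop 0).exists
        refine ⟨x0, ?_⟩
        simp only [eval_neg] at hx0
        nlinarith
      · have ht : Tendsto (fun x => Q.eval x) atTop atTop :=
          tendsto_atTop_of_leadingCoeff_nonneg Q hdeg' hl.le
        obtain ⟨x0, hx0⟩ := (ht.eventually_gt_atTop 0).exists
        exact ⟨x0, mul_pos hl hx0⟩
    have hsame : 0 < Q.eval 0 * Q.eval x0 := by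
      rcases lt_trichotomy (Q.eval 0 * Q.eval x0) 0 with h | h | h
      · exfalso
        have hmem : (0 : ℝ) ∈ Set.uIcc (Q.eval 0) (Q.eval x0) := by
          rw [Set.mem_uIcc]
          rcases mul_neg_iff.1 h with ⟨h1, h2⟩ | ⟨h1, h2⟩
          · exact Or.inr ⟨h2.le, h1.le⟩
          · exact Or.inl ⟨h1.le, h2.le⟩
        have hsub := intermediate_value_uIcc
          (Continuous.continuousOn (Q.continuous_aeval) : ContinuousOn (fun x => Q.eval x) (Set.uIcc 0 x0))
        obtain ⟨cpt, _, hc⟩ := hsub hmem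
        exact heval cpt hc
      · exact absurd h (by simp [heval 0, heval x0, mul_eq_zero])
      · exact h
    nlinarith [mul_pos hsame hx0, mul_self_pos.2 (heval x0)]

lemma zpos_parity (P : Polynomial ℝ) (hP : P ≠ 0) :
    0 < (-1 : ℝ) ^ (zpos P) * (P.trailingCoeff * P.leadingCoeff) := by
  obtain ⟨q, hq, -, hroots⟩ := P.exists_prod_multiset_X_sub_C_mul
  have hq0 : q ≠ 0 := by
    intro h
    rw [h, mul_zero] at hq
    exact hP hq.symm
  have hA : ((P.roots.map fun r => X - C r).prod) ≠ 0 :=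
    (monic_multiset_prod_of_monic _ _ (fun r _ => monic_X_sub_C r)).ne_zero
  have : SG P := by
    rw [← hq]
    exact SG.mul hA hq0 (SG.prod P.roots) (SG.no_roots hq0 hroots)
  exact this

end ZposParity

section CompNegX

lemma rootMultiplicity_comp_neg_X {P : Polynomial ℝ} (hP : P ≠ 0) (a : ℝ) :
    rootMultiplicity a (P.comp (-X)) = rootMultiplicity (-a) P := by
  have hQ := comp_neg_X_ne_zero hP
  have key : ∀ n : ℕ, (X - C a) ^ n ∣ P.comp (-X) ↔ (X - C (-a)) ^ n ∣ P := by
    intro n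
    rw [dvd_comp_neg_X_iff, pow_comp, sub_comp, X_comp, C_comp]
    have h1 : (-X - C a : Polynomial ℝ) = -(X - C (-a)) := by rw [map_neg]; ring
    rw [h1, neg_pow]
    have hu : IsUnit ((-1 : Polynomial ℝ) ^ n) := isUnit_one.neg.pow n
    have hass : Associated ((X - C (-a)) ^ n) ((-1 : Polynomial ℝ) ^ n * (X - C (-a)) ^ n) :=
      ⟨hu.unit, by rw [IsUnit.unit_spec, mul_comm]⟩
    exact hass.dvd_iff_dvd_left.symm
  exact le_antisymm
    ((le_rootMultiplicity_iff hP).2 ((key _).1 (pow_rootMultiplicity_dvd _ a)))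
    ((le_rootMultiplicity_iff hQ).2 ((key _).2 (pow_rootMultiplicity_dvd _ (-a))))

lemma roots_comp_neg_X {P : Polynomial ℝ} (hP : P ≠ 0) :
    (P.comp (-X)).roots = P.roots.map (fun r => -r) := by
  classical
  refine Multiset.ext.2 fun a => ?_
  rw [count_roots, rootMultiplicity_comp_neg_X hP, ← count_roots]
  have h2 := Multiset.count_map_eq_count' (fun r : ℝ => -r) P.roots neg_injective (-a)
  simpa using h2.symm

lemma zneg_eq_zpos_comp {P : Polynomial ℝ} (hP : P ≠ 0) :
    zneg P = zpos (P.comp (-X)) := by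
  classical
  rw [zneg, zpos, roots_comp_neg_X hP, Multiset.filter_map, Multiset.card_map]
  congr 1
  refine Multiset.filter_congr fun x _ => ?_
  simp [neg_pos]

end CompNegX

/-- Fourier's rule (negative part): `z⁻(P) ≡ c(P) (mod 2)`. -/
theorem fourier_rule_neg (P : Polynomial ℝ) (hP : P ≠ 0) :
    zneg P % 2 = c P % 2 := by
  have hQ : P.comp (-X) ≠ 0 := comp_neg_X_ne_zero hP
  have h1 := zpos_parity _ hQ
  have h2 := v_parity _ hQ
  have hz : zneg P = zpos (P.comp (-X)) := zneg_eq_zpos_comp hP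
  have hc : c P = v (P.comp (-X)) := rfl
  rw [hz, hc]
  set m := zpos (P.comp (-X))
  set n := v (P.comp (-X))
  set t := (P.comp (-X)).trailingCoeff * (P.comp (-X)).leadingCoeff with ht
  have hmn : 0 < (-1 : ℝ) ^ (m + n) * (t * t) := by rw [pow_add]; nlinarith
  have hev : Even (m + n) := by
    by_contra hodd
    rw [Nat.not_even_iff_odd] at hodd
    rw [hodd.neg_one_pow] at hmn
    nlinarith
  have := Nat.even_add.1 hev
  rw [Nat.even_iff, Nat.even_iff] at this
  omega
end
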